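/- For every (a₁,...,a_m) ∈ {0,...,b−1}^m, the point of the folded Hammersley point set P_{m,τ_n} indexed by (a₁,...,a_m) coincides with the point of the digital net generated by C₁ and C₂ indexed by (a₁,...,a_m); that is, P_{m,τ_n} is the two-dimensional digital net over Z_b with generating matrices C₁ and C₂. -/

import Mathlib

open scoped BigOperators

/-- Subtraction modulo `b` on `{0, ..., b-1}` (`x ⊖ y`). -/
def bsub (b x y : ℕ) : ℕ := (x + b - y) % b

/-- The point of the folded Hammersley point set `P_{m,τ_n}` in base `b`
indexed by `(a₁, ..., a_m) ∈ {0, ..., b-1}^m`. -/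
noncomputable def foldedHammersleyPoint (b m n : ℕ) (a : Fin m → Fin b) : ℝ × ℝ :=
  (∑ i ∈ Finset.Icc 1 n,
      (bsub b (if h : i < m then (a ⟨i, h⟩ : ℕ) else 0)
              (if h : 0 < m then (a ⟨0, h⟩ : ℕ) else 0) : ℝ) / (b : ℝ) ^ i,
   ∑ i ∈ Finset.Icc 1 n,
      (bsub b (if h : 0 < m ∧ i ≤ m - 1 then (a ⟨m - 1 - i, by omega⟩ : ℕ) else 0)
              (if h : 0 < m then (a ⟨m - 1, by omega⟩ : ℕ) else 0) : ℝ) / (b : ℝ) ^ i)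

/-- Generating matrix `C₁` of the folded Hammersley point set: rows are 0-indexed, row
`i` being row `l = i + 1` of the paper.  For `1 ≤ l ≤ m - 1` the row has entry `b - 1`
in column `1` and entry `1` in column `l + 1` (1-indexed); for `m ≤ l ≤ n` it has entry
`b - 1` in column `1`; all other entries are zero. -/
def fhC1 (b m n : ℕ) : Matrix (Fin n) (Fin m) (ZMod b) := fun i j =>
  if (j : ℕ) = 0 then ((b - 1 : ℕ) : ZMod b)
  else if (i : ℕ) + 2 ≤ m ∧ (j : ℕ) = (i : ℕ) + 1 then 1 else 0

/-- Generating matrix `C₂` of the folded Hammersley point set: rows are 0-indexed, row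
`i` being row `l = i + 1` of the paper.  For `1 ≤ l ≤ m - 1` the row has entry `1` in
column `m - l` and entry `b - 1` in column `m` (1-indexed); for `m ≤ l ≤ n` it has entry
`b - 1` in column `m`; all other entries are zero. -/
def fhC2 (b m n : ℕ) : Matrix (Fin n) (Fin m) (ZMod b) := fun i j =>
  if (j : ℕ) + 1 = m then ((b - 1 : ℕ) : ZMod b)
  else if (i : ℕ) + 2 ≤ m ∧ (j : ℕ) + 2 + (i : ℕ) = m then 1 else 0

/-- The point of the two-dimensional digital net over `ZMod b` with generating
matrices `C₁, C₂` indexed by `(a₁, ..., a_m) ∈ {0, ..., b-1}^m`. -/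
noncomputable def digitalNetPoint (b m n : ℕ) (C1 C2 : Matrix (Fin n) (Fin m) (ZMod b))
    (a : Fin m → Fin b) : ℝ × ℝ :=
  (∑ i : Fin n, ((Matrix.mulVec C1 (fun j => ((a j : ℕ) : ZMod b)) i).val : ℝ) /
      (b : ℝ) ^ ((i : ℕ) + 1),
   ∑ i : Fin n, ((Matrix.mulVec C2 (fun j => ((a j : ℕ) : ZMod b)) i).val : ℝ) /
      (b : ℝ) ^ ((i : ℕ) + 1))


lemma zmod_val_sub (b : ℕ) (hb : 0 < b) (x y : ℕ) (hy : y ≤ b) :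
    ((x : ZMod b) - (y : ZMod b)).val = bsub b x y := by
  haveI : NeZero b := ⟨hb.ne'⟩
  have h1 : ((x : ZMod b) - (y : ZMod b)) = ((x + b - y : ℕ) : ZMod b) := by
    rw [Nat.cast_sub (by omega), Nat.cast_add, ZMod.natCast_self, add_zero]
  rw [h1, ZMod.val_natCast]; rfl

lemma bm1_cast (b : ℕ) (hb : 2 ≤ b) : ((b - 1 : ℕ) : ZMod b) = -1 := by
  rw [Nat.cast_sub (by omega), ZMod.natCast_self, Nat.cast_one, zero_sub]

lemma mulVec_fhC1 (b m n : ℕ) (hb : 2 ≤ b) (a : Fin m → Fin b) (i : Fin n) :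
    Matrix.mulVec (fhC1 b m n) (fun j => ((a j : ℕ) : ZMod b)) i
      = (if h : (i : ℕ) + 1 < m then (((a ⟨(i : ℕ) + 1, h⟩ : ℕ)) : ZMod b) else 0)
        - (if h : 0 < m then (((a ⟨0, h⟩ : ℕ)) : ZMod b) else 0) := by
  rcases Nat.eq_zero_or_pos m with hm | hm
  · subst hm
    simp [Matrix.mulVec, dotProduct]
  · rw [dif_pos hm]
    set j0 : Fin m := ⟨0, hm⟩ with hj0def
    by_cases h : (i : ℕ) + 1 < m
    · rw [dif_pos h]
      set j1 : Fin m := ⟨(i : ℕ) + 1, h⟩ with hj1def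
      have hf : ∀ j : Fin m, fhC1 b m n i j * ((a j : ℕ) : ZMod b)
          = (if j0 = j then ((b - 1 : ℕ) : ZMod b) * ((a j : ℕ) : ZMod b) else 0)
            + (if j1 = j then ((a j : ℕ) : ZMod b) else 0) := by
        intro j
        by_cases hj : (j : ℕ) = 0
        · have e0 : j0 = j := by apply Fin.ext; simp [hj, hj0def]
          have e1 : j1 ≠ j := by
            intro e; apply absurd (congrArg (Fin.val) e); simp [hj]
          simp [fhC1, hj, e0, e1]
        · rw [show fhC1 b m n i j = if (i : ℕ) + 2 ≤ m ∧ (j : ℕ) = (i : ℕ) + 1 then 1 else 0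
            from by simp [fhC1, hj]]
          have e0 : j0 ≠ j := by
            intro e; apply hj; rw [← e]
          by_cases hj1 : (j : ℕ) = (i : ℕ) + 1
          · have e1 : j1 = j := by apply Fin.ext; simp [hj1, hj1def]
            rw [if_pos ⟨by omega, hj1⟩, if_neg e0, if_pos e1, one_mul, zero_add]
          · have e1 : j1 ≠ j := by
              intro e; apply hj1; rw [← e]
            rw [if_neg (by tauto), if_neg e0, if_neg e1, zero_mul, zero_add]
      calc Matrix.mulVec (fhC1 b m n) (fun j => ((a j : ℕ) : ZMod b)) i
          = ∑ j : Fin m, fhC1 b m n i j * ((a j : ℕ) : ZMod b) := rfl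
        _ = ∑ j : Fin m, ((if j0 = j then ((b - 1 : ℕ) : ZMod b) * ((a j : ℕ) : ZMod b) else 0)
              + (if j1 = j then ((a j : ℕ) : ZMod b) else 0)) := by
            exact Finset.sum_congr rfl fun j _ => hf j
        _ = ((b - 1 : ℕ) : ZMod b) * ((a j0 : ℕ) : ZMod b) + ((a j1 : ℕ) : ZMod b) := by
            rw [Finset.sum_add_distrib, Finset.sum_ite_eq, Finset.sum_ite_eq]
            simp
        _ = ((a j1 : ℕ) : ZMod b) - ((a j0 : ℕ) : ZMod b) := by
            rw [bm1_cast b hb]; ring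
    · rw [dif_neg h]
      have hf : ∀ j : Fin m, fhC1 b m n i j * ((a j : ℕ) : ZMod b)
          = (if j0 = j then ((b - 1 : ℕ) : ZMod b) * ((a j : ℕ) : ZMod b) else 0) := by
        intro j
        by_cases hj : (j : ℕ) = 0
        · have e0 : j0 = j := by apply Fin.ext; simp [hj, hj0def]
          simp [fhC1, hj, e0]
        · have e0 : j0 ≠ j := by intro e; apply hj; rw [← e]
          have : ¬((i : ℕ) + 2 ≤ m ∧ (j : ℕ) = (i : ℕ) + 1) := by
            rintro ⟨h1, -⟩; omega
          simp [fhC1, hj, e0, this]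
      calc Matrix.mulVec (fhC1 b m n) (fun j => ((a j : ℕ) : ZMod b)) i
          = ∑ j : Fin m, fhC1 b m n i j * ((a j : ℕ) : ZMod b) := rfl
        _ = ∑ j : Fin m, (if j0 = j then ((b - 1 : ℕ) : ZMod b) * ((a j : ℕ) : ZMod b) else 0) :=
            Finset.sum_congr rfl fun j _ => hf j
        _ = ((b - 1 : ℕ) : ZMod b) * ((a j0 : ℕ) : ZMod b) := by
            rw [Finset.sum_ite_eq]; simp
        _ = 0 - ((a j0 : ℕ) : ZMod b) := by rw [bm1_cast b hb]; ring

lemma mulVec_fhC2 (b m n : ℕ) (hb : 2 ≤ b) (a : Fin m → Fin b) (i : Fin n) :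
    Matrix.mulVec (fhC2 b m n) (fun j => ((a j : ℕ) : ZMod b)) i
      = (if h : (i : ℕ) + 1 < m then (((a ⟨m - 2 - (i : ℕ), by omega⟩ : ℕ)) : ZMod b) else 0)
        - (if h : 0 < m then (((a ⟨m - 1, by omega⟩ : ℕ)) : ZMod b) else 0) := by
  rcases Nat.eq_zero_or_pos m with hm | hm
  · subst hm
    simp [Matrix.mulVec, dotProduct]
  · rw [dif_pos hm]
    set j0 : Fin m := ⟨m - 1, by omega⟩ with hj0def
    by_cases h : (i : ℕ) + 1 < m
    · rw [dif_pos h]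
      set j1 : Fin m := ⟨m - 2 - (i : ℕ), by omega⟩ with hj1def
      have hf : ∀ j : Fin m, fhC2 b m n i j * ((a j : ℕ) : ZMod b)
          = (if j0 = j then ((b - 1 : ℕ) : ZMod b) * ((a j : ℕ) : ZMod b) else 0)
            + (if j1 = j then ((a j : ℕ) : ZMod b) else 0) := by
        intro j
        by_cases hj : (j : ℕ) + 1 = m
        · have e0 : j0 = j := by apply Fin.ext; simp [hj0def]; omega
          have e1 : j1 ≠ j := by
            intro e; apply absurd (congrArg (Fin.val) e); simp [hj1def]; omega
          simp [fhC2, hj, e0, e1]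
        · rw [show fhC2 b m n i j = if (i : ℕ) + 2 ≤ m ∧ (j : ℕ) + 2 + (i : ℕ) = m then 1 else 0
            from by simp [fhC2, hj]]
          have e0 : j0 ≠ j := by
            intro e; apply hj
            have := congrArg (Fin.val) e; simp [hj0def] at this; omega
          by_cases hj1 : (j : ℕ) + 2 + (i : ℕ) = m
          · have e1 : j1 = j := by apply Fin.ext; simp [hj1def]; omega
            rw [if_pos ⟨by omega, hj1⟩, if_neg e0, if_pos e1, one_mul, zero_add]
          · have e1 : j1 ≠ j := by
              intro e; apply hj1
              have := congrArg (Fin.val) e; simp [hj1def] at this; omega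
            rw [if_neg (by tauto), if_neg e0, if_neg e1, zero_mul, zero_add]
      calc Matrix.mulVec (fhC2 b m n) (fun j => ((a j : ℕ) : ZMod b)) i
          = ∑ j : Fin m, fhC2 b m n i j * ((a j : ℕ) : ZMod b) := rfl
        _ = ∑ j : Fin m, ((if j0 = j then ((b - 1 : ℕ) : ZMod b) * ((a j : ℕ) : ZMod b) else 0)
              + (if j1 = j then ((a j : ℕ) : ZMod b) else 0)) :=
            Finset.sum_congr rfl fun j _ => hf j
        _ = ((b - 1 : ℕ) : ZMod b) * ((a j0 : ℕ) : ZMod b) + ((a j1 : ℕ) : ZMod b) := by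
            rw [Finset.sum_add_distrib, Finset.sum_ite_eq, Finset.sum_ite_eq]
            simp
        _ = ((a j1 : ℕ) : ZMod b) - ((a j0 : ℕ) : ZMod b) := by
            rw [bm1_cast b hb]; ring
    · rw [dif_neg h]
      have hf : ∀ j : Fin m, fhC2 b m n i j * ((a j : ℕ) : ZMod b)
          = (if j0 = j then ((b - 1 : ℕ) : ZMod b) * ((a j : ℕ) : ZMod b) else 0) := by
        intro j
        by_cases hj : (j : ℕ) + 1 = m
        · have e0 : j0 = j := by apply Fin.ext; simp [hj0def]; omega
          simp [fhC2, hj, e0]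
        · have e0 : j0 ≠ j := by
            intro e; apply hj
            have := congrArg (Fin.val) e; simp [hj0def] at this; omega
          have : ¬((i : ℕ) + 2 ≤ m ∧ (j : ℕ) + 2 + (i : ℕ) = m) := by
            rintro ⟨h1, -⟩; omega
          simp [fhC2, hj, e0, this]
      calc Matrix.mulVec (fhC2 b m n) (fun j => ((a j : ℕ) : ZMod b)) i
          = ∑ j : Fin m, fhC2 b m n i j * ((a j : ℕ) : ZMod b) := rfl
        _ = ∑ j : Fin m, (if j0 = j then ((b - 1 : ℕ) : ZMod b) * ((a j : ℕ) : ZMod b) else 0) :=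
            Finset.sum_congr rfl fun j _ => hf j
        _ = ((b - 1 : ℕ) : ZMod b) * ((a j0 : ℕ) : ZMod b) := by
            rw [Finset.sum_ite_eq]; simp
        _ = 0 - ((a j0 : ℕ) : ZMod b) := by rw [bm1_cast b hb]; ring

/-- For every `(a₁, ..., a_m) ∈ {0, ..., b-1}^m`, the point of the
folded Hammersley point set `P_{m,τ_n}` indexed by `(a₁, ..., a_m)` coincides with
the point of the digital net generated by `C₁` and `C₂` indexed by `(a₁, ..., a_m)`;
that is, `P_{m,τ_n}` is the two-dimensional digital net over `ZMod b` with generating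
matrices `C₁` and `C₂`. -/
theorem folded_hammersley_is_digital_net (b m n : ℕ) (hb : 2 ≤ b) (hmn : 2 * m ≤ n)
    (a : Fin m → Fin b) :
    foldedHammersleyPoint b m n a = digitalNetPoint b m n (fhC1 b m n) (fhC2 b m n) a := by
  have hb0 : 0 < b := by omega
  have hIcc : Finset.Icc 1 n = Finset.Ico 1 (n + 1) := (Finset.Ico_add_one_right_eq_Icc 1 n).symm
  unfold foldedHammersleyPoint digitalNetPoint
  rw [Prod.mk.injEq]
  refine ⟨?_, ?_⟩
  · set F1 : ℕ → ℝ := fun k =>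
      (bsub b (if h : 1 + k < m then (a ⟨1 + k, h⟩ : ℕ) else 0)
              (if h : 0 < m then (a ⟨0, h⟩ : ℕ) else 0) : ℝ) / (b : ℝ) ^ (1 + k) with hF1
    have key1 : ∀ i : Fin n,
        ((Matrix.mulVec (fhC1 b m n) (fun j => ((a j : ℕ) : ZMod b)) i).val : ℝ) /
          (b : ℝ) ^ ((i : ℕ) + 1) = F1 (i : ℕ) := by
      intro i
      rw [mulVec_fhC1 b m n hb a i]
      have e1 : (if h : (i : ℕ) + 1 < m then (((a ⟨(i : ℕ) + 1, h⟩ : ℕ)) : ZMod b) else 0)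
          = (((if h : (i : ℕ) + 1 < m then (a ⟨(i : ℕ) + 1, h⟩ : ℕ) else 0) : ℕ) : ZMod b) := by
        split <;> simp
      have e2 : (if h : 0 < m then (((a ⟨0, h⟩ : ℕ)) : ZMod b) else 0)
          = (((if h : 0 < m then (a ⟨0, h⟩ : ℕ) else 0) : ℕ) : ZMod b) := by
        split <;> simp
      rw [e1, e2, zmod_val_sub b hb0 _ _ (by split; exacts [le_of_lt (Fin.is_lt _), Nat.zero_le b])]
      have e3 : (if h : (i : ℕ) + 1 < m then (a ⟨(i : ℕ) + 1, h⟩ : ℕ) else 0)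
          = (if h : 1 + (i : ℕ) < m then (a ⟨1 + (i : ℕ), h⟩ : ℕ) else 0) := by
        rcases lt_or_ge ((i : ℕ) + 1) m with h | h
        · rw [dif_pos h, dif_pos (by omega)]
          have hx : (⟨(i : ℕ) + 1, h⟩ : Fin m) = ⟨1 + (i : ℕ), by omega⟩ :=
            Fin.mk_eq_mk.mpr (by omega)
          rw [hx]
        · rw [dif_neg (by omega), dif_neg (by omega)]
      rw [e3, show (i : ℕ) + 1 = 1 + (i : ℕ) from Nat.add_comm _ _, hF1]
    rw [Finset.sum_congr rfl (fun i _ => key1 i), Fin.sum_univ_eq_sum_range F1 n,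
      hIcc, Finset.sum_Ico_eq_sum_range, Nat.add_sub_cancel]
  · set F2 : ℕ → ℝ := fun k =>
      (bsub b (if h : 0 < m ∧ 1 + k ≤ m - 1 then (a ⟨m - 1 - (1 + k), by omega⟩ : ℕ) else 0)
              (if h : 0 < m then (a ⟨m - 1, by omega⟩ : ℕ) else 0) : ℝ) / (b : ℝ) ^ (1 + k)
      with hF2
    have key2 : ∀ i : Fin n,
        ((Matrix.mulVec (fhC2 b m n) (fun j => ((a j : ℕ) : ZMod b)) i).val : ℝ) /
          (b : ℝ) ^ ((i : ℕ) + 1) = F2 (i : ℕ) := by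
      intro i
      rw [mulVec_fhC2 b m n hb a i]
      have e1 : (if h : (i : ℕ) + 1 < m then
            (((a ⟨m - 2 - (i : ℕ), by omega⟩ : ℕ)) : ZMod b) else 0)
          = (((if h : (i : ℕ) + 1 < m then (a ⟨m - 2 - (i : ℕ), by omega⟩ : ℕ) else 0) : ℕ)
              : ZMod b) := by
        split <;> simp
      have e2 : (if h : 0 < m then (((a ⟨m - 1, by omega⟩ : ℕ)) : ZMod b) else 0)
          = (((if h : 0 < m then (a ⟨m - 1, by omega⟩ : ℕ) else 0) : ℕ) : ZMod b) := by
        split <;> simp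
      rw [e1, e2, zmod_val_sub b hb0 _ _ (by split; exacts [le_of_lt (Fin.is_lt _), Nat.zero_le b])]
      have e3 : (if h : (i : ℕ) + 1 < m then (a ⟨m - 2 - (i : ℕ), by omega⟩ : ℕ) else 0)
          = (if h : 0 < m ∧ 1 + (i : ℕ) ≤ m - 1 then
              (a ⟨m - 1 - (1 + (i : ℕ)), by omega⟩ : ℕ) else 0) := by
        rcases lt_or_ge ((i : ℕ) + 1) m with h | h
        · rw [dif_pos h, dif_pos ⟨by omega, by omega⟩]
          have hx : (⟨m - 2 - (i : ℕ), by omega⟩ : Fin m) = ⟨m - 1 - (1 + (i : ℕ)), by omega⟩ :=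
            Fin.mk_eq_mk.mpr (by omega)
          rw [hx]
        · rw [dif_neg (by omega), dif_neg (by rintro ⟨h1, h2⟩; omega)]
      rw [e3, show (i : ℕ) + 1 = 1 + (i : ℕ) from Nat.add_comm _ _, hF2]
    rw [Finset.sum_congr rfl (fun i _ => key2 i), Fin.sum_univ_eq_sum_range F2 n,
      hIcc, Finset.sum_Ico_eq_sum_range, Nat.add_sub_cancel]
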